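/- Let (P, ≤) be an upper finite partially ordered set with a maximum element I, i.e. {q ∈ P | p ≤ q} is finite for every p ∈ P. A weight function is a map w : P → ℕ with w(I) = 0; for a weight function w define h_w : P → ℕ by h_w(p) = max{ Σ_{i=0}^n w(p_i) | p = p_n < ⋯ < p_1 < p_0 = I is a strictly increasing chain in P } (well defined by upper finiteness). Then the correspondence w ↦ h_w is a bijection from the set of all weight functions w : P → ℕ onto the set of all order-reversing maps h : P → ℕ with h(I) = 0 (h order-reversing means p ≤ q implies h(q) ≤ h(p)). -/

import Mathlib

namespace Dede

variable {P : Type*} [PartialOrder P]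

def S (I : P) (w : P → ℕ) (p : P) : Set ℕ :=
  { s : ℕ | ∃ c : List P, c.Chain' (· < ·) ∧ c.head? = some p ∧
      c.getLast? = some I ∧ s = (c.map w).sum }

lemma S_nonempty (I : P) (hI : ∀ p : P, p ≤ I) (w : P → ℕ) (p : P) : (S I w p).Nonempty := by
  rcases eq_or_lt_of_le (hI p) with h | h
  · exact ⟨w p, [p], by simp [List.Chain'], by simp, by simp [h], by simp⟩
  · exact ⟨w p + w I, [p, I], by simp [List.Chain', h], by simp, by simp, by simp⟩

lemma chain_le {c : List P} (hc : c.Chain' (· < ·)) {p : P} (hp : c.head? = some p) :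
    ∀ q ∈ c, p ≤ q := by
  cases c with
  | nil => simp at hp
  | cons a t =>
    simp only [List.head?_cons, Option.some.injEq] at hp
    subst hp
    intro q hq
    rcases List.mem_cons.1 hq with rfl | hq
    · exact le_refl _
    · exact ((List.pairwise_cons.1 (List.isChain_iff_pairwise.1 hc)).1 q hq).le

lemma chain_nodup {c : List P} (hc : c.Chain' (· < ·)) : c.Nodup :=
  (List.isChain_iff_pairwise.1 hc).imp ne_of_lt

lemma S_bddAbove (I : P) (hupper : ∀ p : P, {q : P | p ≤ q}.Finite) (w : P → ℕ) (p : P) :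
    BddAbove (S I w p) := by
  classical
  refine ⟨∑ q ∈ (hupper p).toFinset, w q, ?_⟩
  rintro s ⟨c, hc, hh, hl, rfl⟩
  have hnd : c.Nodup := chain_nodup hc
  rw [← List.sum_toFinset _ hnd]
  exact Finset.sum_le_sum_of_subset (fun x hx => by
    simp only [Set.Finite.mem_toFinset, Set.mem_setOf_eq]
    exact chain_le hc hh x (List.mem_toFinset.1 hx))


lemma S_top (I : P) (hI : ∀ p : P, p ≤ I) (w : P → ℕ) : S I w I = {w I} := by
  ext s
  constructor
  · rintro ⟨c, hc, hh, hl, rfl⟩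
    cases c with
    | nil => simp at hh
    | cons a t =>
      simp only [List.head?_cons, Option.some.injEq] at hh
      subst hh
      cases t with
      | nil => simp
      | cons b t' =>
        exact absurd ((List.isChain_cons_cons.1 hc).1.trans_le (hI b)) (lt_irrefl _)
  · rintro rfl
    exact ⟨[I], by simp [List.Chain'], by simp, by simp, by simp⟩

lemma S_decomp {I : P} {w : P → ℕ} {p : P} (hp : p ≠ I) {s : ℕ} (hs : s ∈ S I w p) :
    ∃ q, p < q ∧ ∃ s', s' ∈ S I w q ∧ s = w p + s' := by
  obtain ⟨c, hc, hh, hl, rfl⟩ := hs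
  cases c with
  | nil => simp at hh
  | cons a t =>
    simp only [List.head?_cons, Option.some.injEq] at hh
    subst hh
    cases t with
    | nil => simp only [List.getLast?_singleton, Option.some.injEq] at hl; exact absurd hl hp
    | cons b t' =>
      refine ⟨b, (List.isChain_cons_cons.1 hc).1, (List.map w (b :: t')).sum, ⟨b :: t',
        (List.isChain_cons_cons.1 hc).2, by simp, ?_, rfl⟩, by simp⟩
      rw [← hl]
      exact (List.getLast?_cons_cons ..).symm

lemma S_compose {I : P} {w : P → ℕ} {p q : P} (hpq : p < q) {s' : ℕ} (hs : s' ∈ S I w q) :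
    w p + s' ∈ S I w p := by
  obtain ⟨c, hc, hh, hl, rfl⟩ := hs
  have hcne : c ≠ [] := by rintro rfl; simp at hh
  refine ⟨p :: c, List.isChain_cons.2 ⟨fun b hb => ?_, hc⟩, by simp, ?_, by simp⟩
  · rw [hh] at hb; rwa [Option.mem_some_iff.1 hb] at hpq
  · exact Option.mem_def.1 (List.mem_getLast?_cons (Option.mem_def.2 hl))


lemma Fw_mem (I : P) (hI : ∀ p : P, p ≤ I) (hupper : ∀ p : P, {q : P | p ≤ q}.Finite)
    (w : P → ℕ) (p : P) : sSup (S I w p) ∈ S I w p :=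
  Nat.sSup_mem (S_nonempty I hI w p) (S_bddAbove I hupper w p)

lemma Fw_rec (I : P) (hI : ∀ p : P, p ≤ I) (hupper : ∀ p : P, {q : P | p ≤ q}.Finite)
    (w : P → ℕ) {p : P} (hp : p ≠ I) :
    sSup (S I w p) = w p + sSup ((fun q => sSup (S I w q)) '' {q | p < q}) := by
  set T := (fun q => sSup (S I w q)) '' {q | p < q} with hT
  have hTne : T.Nonempty := ⟨_, I, lt_of_le_of_ne (hI p) hp, rfl⟩
  have hTbdd : BddAbove T :=
    (((hupper p).subset (fun q hq => le_of_lt hq)).image _).bddAbove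
  apply le_antisymm
  · apply csSup_le (S_nonempty I hI w p)
    rintro s hs
    obtain ⟨q, hq, s', hs', rfl⟩ := S_decomp hp hs
    have h1 : s' ≤ sSup (S I w q) := le_csSup (S_bddAbove I hupper w q) hs'
    have h2 : sSup (S I w q) ≤ sSup T := le_csSup hTbdd ⟨q, hq, rfl⟩
    exact Nat.add_le_add_left (h1.trans h2) _
  · obtain ⟨q, hq, hq2⟩ := Nat.sSup_mem hTne hTbdd
    rw [← hq2]
    exact le_csSup (S_bddAbove I hupper w p) (S_compose hq (Fw_mem I hI hupper w q))

lemma master (I : P) (hI : ∀ p : P, p ≤ I) (hupper : ∀ p : P, {q : P | p ≤ q}.Finite) :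
    Set.BijOn (fun w p => sSup (S I w p))
      {w : P → ℕ | w I = 0} {h : P → ℕ | Antitone h ∧ h I = 0} := by
  refine ⟨?_, ?_, ?_⟩
  · intro w hw
    refine ⟨?_, ?_⟩
    · intro p q hpq
      rcases eq_or_lt_of_le hpq with rfl | h
      · exact le_refl _
      · apply csSup_le (S_nonempty I hI w q)
        intro s hs
        exact le_trans (Nat.le_add_left s (w p))
          (le_csSup (S_bddAbove I hupper w p) (S_compose h hs))
    · simp only [S_top I hI, csSup_singleton]
      exact hw
  · intro w hw w' hw' hww
    funext p
    by_cases hp : p = I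
    · subst hp; exact hw.trans hw'.symm
    · have e1 := Fw_rec I hI hupper w hp
      have e2 := Fw_rec I hI hupper w' hp
      have hfun : (fun q => sSup (S I w q)) = (fun q => sSup (S I w' q)) := hww
      rw [hfun] at e1
      have : sSup (S I w p) = sSup (S I w' p) := congrFun hfun p
      omega
  · rintro h ⟨hanti, hI0⟩
    classical
    set w : P → ℕ := fun p => if p = I then 0 else h p - sSup (h '' {q | p < q}) with hwdef
    refine ⟨w, by simp [hwdef], ?_⟩
    have key : ∀ n : ℕ, ∀ p : P, (hupper p).toFinset.card = n → sSup (S I w p) = h p := by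
      intro n
      induction n using Nat.strong_induction_on with
      | _ n IH =>
        intro p hcard
        by_cases hp : p = I
        · subst hp
          rw [S_top _ hI, csSup_singleton]
          simp [hwdef, hI0]
        · have hlt : p < I := lt_of_le_of_ne (hI p) hp
          have IH' : ∀ q, p < q → sSup (S I w q) = h q := by
            intro q hq
            refine IH ((hupper q).toFinset.card) ?_ q rfl
            rw [← hcard]
            refine Finset.card_lt_card ((Finset.ssubset_iff_of_subset ?_).2 ⟨p, ?_, ?_⟩)
            · intro r hr
              simp only [Set.Finite.mem_toFinset, Set.mem_setOf_eq] at hr ⊢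
              exact (hq.le).trans hr
            · simp only [Set.Finite.mem_toFinset, Set.mem_setOf_eq]
              exact le_refl p
            · simp only [Set.Finite.mem_toFinset, Set.mem_setOf_eq]
              exact fun hle => absurd (hq.trans_le hle) (lt_irrefl p)
          rw [Fw_rec I hI hupper w hp]
          have himg : (fun q => sSup (S I w q)) '' {q | p < q} = h '' {q | p < q} :=
            Set.image_congr (fun q hq => IH' q hq)
          rw [himg]
          have hm : sSup (h '' {q | p < q}) ≤ h p :=
            csSup_le ⟨h I, I, hlt, rfl⟩ (by rintro _ ⟨q, hq, rfl⟩; exact hanti hq.le)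
          have hwp : w p = h p - sSup (h '' {q | p < q}) := by simp [hwdef, hp]
          omega
    exact funext fun p => key _ p rfl

end Dede

/-- Dedekind inversion: on an upper finite partially ordered set `P` with maximum
`I`, the map sending a weight function `w` (a map `P → ℕ` with `w I = 0`) to
`h_w(p) = max { Σ w(p_i) | p = p_n < ⋯ < p_1 < p_0 = I a chain in P }` is a
bijection onto the set of order-reversing maps `h : P → ℕ` with `h I = 0`. -/
theorem stmt_10 {P : Type*} [PartialOrder P] (I : P) (hI : ∀ p : P, p ≤ I)
    (hupper : ∀ p : P, {q : P | p ≤ q}.Finite) :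
    Set.BijOn
      (fun (w : P → ℕ) (p : P) =>
        sSup { s : ℕ | ∃ c : List P, c.Chain' (· < ·) ∧ c.head? = some p ∧
          c.getLast? = some I ∧ s = (c.map w).sum })
      {w : P → ℕ | w I = 0}
      {h : P → ℕ | Antitone h ∧ h I = 0} :=
  Dede.master I hI hupper
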